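/- Let ν be a probability measure on a finite set X and let V ⊆ X with both V and X∖V nonempty. Then the Shannon entropy of ν satisfies H(ν) ≤ log 2 + ν(V) · log |V| + (1 − ν(V)) · log |X∖V|. In particular, if ν(V) ≥ 1 − ε then H(ν) ≤ log 2 + log |V| + ε · log |X∖V|. -/

import Mathlib

open Finset

lemma pointwise_neg_mul_log_le (a c : ℝ) (ha : 0 ≤ a) (hc : 0 < c) :
    -(a * Real.log a) ≤ a * Real.log c + 1 / c - a := by
  rcases eq_or_lt_of_le ha with h | h
  · simp [← h]; positivity
  · have hac : 0 < a * c := mul_pos h hc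
    have h1 : Real.log (1 / (a * c)) ≤ 1 / (a * c) - 1 :=
      Real.log_le_sub_one_of_pos (by positivity)
    have h2 : Real.log (1 / (a * c)) = -(Real.log a) - Real.log c := by
      rw [one_div, Real.log_inv, Real.log_mul h.ne' hc.ne']; ring
    have := mul_le_mul_of_nonneg_left h1 ha
    rw [h2] at this
    have haa : a * (1 / (a * c) - 1) = 1 / c - a := by
      field_simp
    rw [haa] at this
    nlinarith

lemma sum_neg_mul_log_le {X : Type*} [Fintype X] [DecidableEq X] (ν : X → ℝ)
    (hpos : ∀ x, 0 ≤ ν x) (S : Finset X) (hS : S.Nonempty) :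
    -∑ x ∈ S, ν x * Real.log (ν x) ≤
      (∑ x ∈ S, ν x) * Real.log (S.card : ℝ) - (∑ x ∈ S, ν x) * Real.log (∑ x ∈ S, ν x) := by
  set p := ∑ x ∈ S, ν x with hp
  have hp0 : 0 ≤ p := Finset.sum_nonneg fun x _ => hpos x
  have hn : (0 : ℝ) < S.card := by exact_mod_cast Finset.card_pos.mpr hS
  rcases eq_or_lt_of_le hp0 with h | h
  · have hall : ∀ x ∈ S, ν x = 0 := by
      intro x hx
      have := (Finset.sum_eq_zero_iff_of_nonneg fun x _ => hpos x).mp h.symm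
      exact this x hx
    rw [← h]
    have hz : ∑ x ∈ S, ν x * Real.log (ν x) = 0 :=
      Finset.sum_eq_zero fun x hx => by rw [hall x hx]; simp
    simp [hz]
  · set c := (S.card : ℝ) / p with hc
    have hcpos : 0 < c := by positivity
    calc -∑ x ∈ S, ν x * Real.log (ν x) = ∑ x ∈ S, -(ν x * Real.log (ν x)) := by
            rw [Finset.sum_neg_distrib]
      _ ≤ ∑ x ∈ S, (ν x * Real.log c + 1 / c - ν x) :=
            Finset.sum_le_sum fun x _ => pointwise_neg_mul_log_le (ν x) c (hpos x) hcpos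
      _ = p * Real.log c + S.card * (1 / c) - p := by
            rw [Finset.sum_sub_distrib, Finset.sum_add_distrib, ← Finset.sum_mul,
              Finset.sum_const, nsmul_eq_mul]
      _ = p * Real.log (S.card : ℝ) - p * Real.log p := by
            rw [hc, Real.log_div hn.ne' h.ne']
            field_simp
            ring

/-- Entropy decomposition estimate: for a probability measure `ν` on a finite set `X` and
`V ⊆ X` with `V` and `X∖V` nonempty,
`H(ν) ≤ log 2 + ν(V)·log |V| + (1 − ν(V))·log |X∖V|`; in particular, if `ν(V) ≥ 1 − ε`,
then `H(ν) ≤ log 2 + log |V| + ε·log |X∖V|`. -/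
theorem entropy_decomposition {X : Type*} [Fintype X] [DecidableEq X] (ν : X → ℝ)
    (hpos : ∀ x, 0 ≤ ν x) (hsum : ∑ x, ν x = 1)
    (V : Finset X) (hV : V.Nonempty) (hVc : Vᶜ.Nonempty) :
    (-∑ x, ν x * Real.log (ν x)) ≤
        Real.log 2 + (∑ x ∈ V, ν x) * Real.log (V.card : ℝ)
          + (1 - ∑ x ∈ V, ν x) * Real.log ((Vᶜ).card : ℝ) ∧
      ∀ ε : ℝ, 1 - ε ≤ ∑ x ∈ V, ν x →
        (-∑ x, ν x * Real.log (ν x)) ≤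
          Real.log 2 + Real.log (V.card : ℝ) + ε * Real.log ((Vᶜ).card : ℝ) := by
  set p := ∑ x ∈ V, ν x with hp
  have hsplit : ∑ x, ν x = ∑ x ∈ V, ν x + ∑ x ∈ Vᶜ, ν x :=
    (Finset.sum_add_sum_compl V _).symm
  have hq : ∑ x ∈ Vᶜ, ν x = 1 - p := by rw [← hsum, hsplit]; ring
  have hp0 : 0 ≤ p := Finset.sum_nonneg fun x _ => hpos x
  have hp1 : p ≤ 1 := by
    have : 0 ≤ ∑ x ∈ Vᶜ, ν x := Finset.sum_nonneg fun x _ => hpos x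
    linarith [hq]
  have hEsplit : ∑ x, ν x * Real.log (ν x) =
      ∑ x ∈ V, ν x * Real.log (ν x) + ∑ x ∈ Vᶜ, ν x * Real.log (ν x) :=
    (Finset.sum_add_sum_compl V _).symm
  have h1 := sum_neg_mul_log_le ν hpos V hV
  have h2 := sum_neg_mul_log_le ν hpos Vᶜ hVc
  rw [hq] at h2
  have hbin : -p * Real.log p - (1 - p) * Real.log (1 - p) ≤ Real.log 2 := by
    have := Real.binEntropy_le_log_two (p := p)
    rw [Real.binEntropy, Real.log_inv, Real.log_inv] at this
    linarith
  have hmain : (-∑ x, ν x * Real.log (ν x)) ≤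
      Real.log 2 + p * Real.log (V.card : ℝ) + (1 - p) * Real.log ((Vᶜ).card : ℝ) := by
    rw [hEsplit, neg_add]
    linarith
  refine ⟨hmain, fun ε hε => ?_⟩
  have hlogV : 0 ≤ Real.log (V.card : ℝ) :=
    Real.log_nonneg (by exact_mod_cast Finset.card_pos.mpr hV)
  have hlogVc : 0 ≤ Real.log ((Vᶜ).card : ℝ) :=
    Real.log_nonneg (by exact_mod_cast Finset.card_pos.mpr hVc)
  have hε0 : 1 - p ≤ ε := by linarith
  calc (-∑ x, ν x * Real.log (ν x)) ≤
      Real.log 2 + p * Real.log (V.card : ℝ) + (1 - p) * Real.log ((Vᶜ).card : ℝ) := hmain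
    _ ≤ Real.log 2 + Real.log (V.card : ℝ) + ε * Real.log ((Vᶜ).card : ℝ) := by
        have := mul_le_mul_of_nonneg_right hε0 hlogVc
        nlinarith
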